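/- Let V be the free module over ℤ/2 with basis (ℕ →₀ ℕ) × ℤ × ℤ, and let d : V → V be the ℤ/2-linear map sending a basis element x = (R,m,t) to Φ(x) when m ≠ 0 and R i = 0 for every i < v₂(m), and to 0 otherwise. Then d ∘ d = 0, and the homology ker d / im d is a free ℤ/2-module whose basis is given by the classes of the basis elements (0, 0, t) for t ∈ ℤ; in particular ker d / im d ≅ ⊕_{t ∈ ℤ} ℤ/2, corresponding to the Tate coefficients t(BPℝ)_⋆ = ℤ/2[a, a⁻¹]. -/

import Mathlib

/-!
Monomials `v_R σ^m a^t` in the E₁-term `BP_*[σ, σ⁻¹, a, a⁻¹]` of the Tate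
spectral sequence for `BPℝ` are encoded by triples `(R, m, t) ∈ (ℕ →₀ ℕ) × ℤ × ℤ`.
`V` is the free `ℤ/2`-module on these triples, and `d` is the linear map
encoding the Tate differential.
-/

/-- The 2-adic valuation of an integer. -/
noncomputable def v2 (m : ℤ) : ℕ := padicValInt 2 m

/-- The Tate differential on monomials:
`Φ(R, m, t) = (R + e_{v₂(m)}, m + 2^(v₂(m)), t + 2^(v₂(m)+1) − 1)`. -/
noncomputable def Φ : (ℕ →₀ ℕ) × ℤ × ℤ → (ℕ →₀ ℕ) × ℤ × ℤ := fun x =>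
  (x.1 + Finsupp.single (v2 x.2.1) 1,
   x.2.1 + 2 ^ v2 x.2.1,
   x.2.2 + 2 ^ (v2 x.2.1 + 1) - 1)

abbrev Xt : Type := (ℕ →₀ ℕ) × ℤ × ℤ

def Ax (x : Xt) : Prop := x.2.1 ≠ 0 ∧ ∀ i < v2 x.2.1, x.1 i = 0
def Cx (x : Xt) : Prop := x.1 = 0 ∧ x.2.1 = 0
def Bx (x : Xt) : Prop := ¬ Ax x ∧ ¬ Cx x

noncomputable instance : DecidablePred Ax := fun _ => Classical.propDecidable _
noncomputable instance : DecidablePred Bx := fun _ => Classical.propDecidable _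
noncomputable instance : DecidablePred Cx := fun _ => Classical.propDecidable _

noncomputable def sY (x : Xt) : ℕ := sInf {i | x.1 i ≠ 0}

noncomputable def Ψ (x : Xt) : Xt :=
  (x.1 - Finsupp.single (sY x) 1, x.2.1 - 2 ^ sY x, x.2.2 - 2 ^ (sY x + 1) + 1)

-- number theory
lemma le_v2_iff {m : ℤ} (hm : m ≠ 0) (n : ℕ) : (2:ℤ) ^ n ∣ m ↔ n ≤ v2 m := by
  have := padicValInt_dvd_iff (p := 2) n m
  simp only [Nat.cast_ofNat] at this
  rw [v2, this]
  simp [hm]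

lemma pow_v2_dvd (m : ℤ) : (2:ℤ) ^ v2 m ∣ m := by
  rcases eq_or_ne m 0 with h | h
  · simp [h]
  · exact (le_v2_iff h _).mpr le_rfl

lemma not_pow_succ_dvd {m : ℤ} (hm : m ≠ 0) : ¬ (2:ℤ) ^ (v2 m + 1) ∣ m := by
  rw [le_v2_iff hm]; omega

lemma v2_eq {m : ℤ} {s : ℕ} (hm : m ≠ 0) (h1 : (2:ℤ) ^ s ∣ m)
    (h2 : ¬ (2:ℤ) ^ (s+1) ∣ m) : v2 m = s := by
  rw [le_v2_iff hm] at h1 h2; omega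

lemma dvd_add_pow {m : ℤ} (hm : m ≠ 0) : (2:ℤ) ^ (v2 m + 1) ∣ m + 2 ^ v2 m := by
  have hd := pow_v2_dvd m
  have hnd := not_pow_succ_dvd hm
  set s := v2 m with hs
  clear_value s
  obtain ⟨k, hk⟩ := hd
  have hodd : ¬ (2:ℤ) ∣ k := by
    intro ⟨j, hj⟩
    exact hnd ⟨j, by rw [hk, hj]; ring⟩
  have h2 : (2:ℤ) ∣ k + 1 := by omega
  obtain ⟨j, hj⟩ := h2
  exact ⟨j, by rw [hk, pow_succ]; linear_combination (2:ℤ) ^ s * hj⟩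

lemma pow_succ_not_dvd_pow (s : ℕ) : ¬ (2:ℤ) ^ (s+1) ∣ 2 ^ s := by
  intro h
  have h1 : (2:ℤ) ^ (s+1) ≤ 2 ^ s := Int.le_of_dvd (by positivity) h
  have h2 : (2:ℤ) ^ s < 2 ^ (s+1) := by
    apply pow_lt_pow_right₀ <;> omega
  omega

lemma v2_sub_pow {m : ℤ} {s : ℕ} (h : (2:ℤ) ^ (s+1) ∣ m) :
    m - 2 ^ s ≠ 0 ∧ v2 (m - 2 ^ s) = s := by
  have hne : m - 2 ^ s ≠ 0 := by
    intro h0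
    have : m = 2 ^ s := by omega
    exact pow_succ_not_dvd_pow s (this ▸ h)
  refine ⟨hne, v2_eq hne ?_ ?_⟩
  · exact dvd_sub (dvd_trans (pow_dvd_pow 2 (by omega)) h) dvd_rfl
  · intro h2
    exact pow_succ_not_dvd_pow s (by have := dvd_sub h h2; simpa using this)

lemma Ax_not_Cx {x : Xt} (hx : Ax x) : ¬ Cx x := fun hc => hx.1 hc.2

lemma sInf_eq_of {S : Set ℕ} {s : ℕ} (h1 : s ∈ S) (h2 : ∀ i < s, i ∉ S) : sInf S = s := by
  apply le_antisymm (Nat.sInf_le h1)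
  by_contra h
  push_neg at h
  exact h2 _ h (Nat.sInf_mem ⟨_, h1⟩)

lemma sY_Phi {x : Xt} (hx : Ax x) : sY (Φ x) = v2 x.2.1 := by
  apply sInf_eq_of
  · show ((x.1 + Finsupp.single (v2 x.2.1) 1 : ℕ →₀ ℕ)) (v2 x.2.1) ≠ 0
    simp [Finsupp.add_apply, Finsupp.single_apply]
  · intro i hi hmem
    have h1 : x.1 i = 0 := hx.2 _ hi
    have h2 : Finsupp.single (v2 x.2.1) 1 i = (0:ℕ) := by
      rw [Finsupp.single_apply, if_neg (by omega)]
    have : ((x.1 + Finsupp.single (v2 x.2.1) 1 : ℕ →₀ ℕ)) i ≠ 0 := hmem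
    rw [Finsupp.add_apply, h1, h2] at this
    exact this rfl

lemma Bx_Phi {x : Xt} (hx : Ax x) : Bx (Φ x) := by
  obtain ⟨hm, hR⟩ := hx
  constructor
  · rintro ⟨hne, hall⟩
    have hdvd : (2:ℤ) ^ (v2 x.2.1 + 1) ∣ (Φ x).2.1 := dvd_add_pow hm
    have hle : v2 x.2.1 + 1 ≤ v2 (Φ x).2.1 := (le_v2_iff hne _).mp hdvd
    have h0 := hall (v2 x.2.1) (by omega)
    rw [show (Φ x).1 = x.1 + Finsupp.single (v2 x.2.1) 1 from rfl] at h0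
    simp [Finsupp.add_apply, Finsupp.single_apply] at h0
  · rintro ⟨h1, -⟩
    have h0 : (Φ x).1 (v2 x.2.1) = 0 := by rw [h1]; rfl
    rw [show (Φ x).1 = x.1 + Finsupp.single (v2 x.2.1) 1 from rfl] at h0
    simp [Finsupp.add_apply, Finsupp.single_apply] at h0

lemma Psi_Phi {x : Xt} (hx : Ax x) : Ψ (Φ x) = x := by
  have hs := sY_Phi hx
  rw [Ψ, hs]
  refine Prod.ext ?_ (Prod.ext ?_ ?_)
  · show x.1 + Finsupp.single (v2 x.2.1) 1 - Finsupp.single (v2 x.2.1) 1 = x.1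
    exact add_tsub_cancel_right x.1 _
  · show x.2.1 + 2 ^ v2 x.2.1 - 2 ^ v2 x.2.1 = x.2.1; ring
  · show x.2.2 + 2 ^ (v2 x.2.1 + 1) - 1 - 2 ^ (v2 x.2.1 + 1) + 1 = x.2.2; ring

lemma Bx_props {y : Xt} (hy : Bx y) :
    y.1 (sY y) ≠ 0 ∧ (∀ i < sY y, y.1 i = 0) ∧ (2:ℤ) ^ (sY y + 1) ∣ y.2.1 := by
  obtain ⟨hA, hC⟩ := hy
  have hR : y.1 ≠ 0 := by
    intro h0
    rcases eq_or_ne y.2.1 0 with hm | hm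
    · exact hC ⟨h0, hm⟩
    · exact hA ⟨hm, fun i _ => by simp [h0]⟩
  have hne : {i | y.1 i ≠ 0}.Nonempty := by
    rw [Finsupp.ne_iff] at hR
    obtain ⟨a, ha⟩ := hR
    exact ⟨a, by simpa using ha⟩
  have hmem := Nat.sInf_mem hne
  have hlow : ∀ i < sY y, y.1 i = 0 := fun i hi => by
    by_contra h
    exact Nat.notMem_of_lt_sInf hi h
  refine ⟨hmem, hlow, ?_⟩
  rcases eq_or_ne y.2.1 0 with hm | hm
  · simp [hm]
  · have hex : ∃ i, i < v2 y.2.1 ∧ y.1 i ≠ 0 := by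
      by_contra hno
      push_neg at hno
      exact hA ⟨hm, fun i hi => hno i hi⟩
    obtain ⟨i, hi1, hi2⟩ := hex
    have hsle : sY y ≤ i := Nat.sInf_le hi2
    exact (le_v2_iff hm _).mpr (by omega)

lemma Ax_Psi {y : Xt} (hy : Bx y) : Ax (Ψ y) := by
  obtain ⟨hmem, hlow, hdvd⟩ := Bx_props hy
  obtain ⟨hne, hv2⟩ := v2_sub_pow hdvd
  refine ⟨hne, ?_⟩
  intro i hi
  rw [show (Ψ y).2.1 = y.2.1 - 2 ^ sY y from rfl, hv2] at hi
  show ((y.1 - Finsupp.single (sY y) 1 : ℕ →₀ ℕ)) i = 0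
  rw [Finsupp.tsub_apply, hlow i hi, Nat.zero_sub]

lemma Phi_Psi {y : Xt} (hy : Bx y) : Φ (Ψ y) = y := by
  obtain ⟨hmem, hlow, hdvd⟩ := Bx_props hy
  obtain ⟨hne, hv2⟩ := v2_sub_pow hdvd
  have hv : v2 (Ψ y).2.1 = sY y := hv2
  rw [Φ, hv]
  refine Prod.ext ?_ (Prod.ext ?_ ?_)
  · show y.1 - Finsupp.single (sY y) 1 + Finsupp.single (sY y) 1 = y.1
    exact tsub_add_cancel_of_le (Finsupp.single_le_iff.mpr (Nat.one_le_iff_ne_zero.mpr hmem))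
  · show y.2.1 - 2 ^ sY y + 2 ^ sY y = y.2.1; ring
  · show y.2.2 - 2 ^ (sY y + 1) + 1 + 2 ^ (sY y + 1) - 1 = y.2.2; ring

/-- The free `ℤ/2`-module with basis `(ℕ →₀ ℕ) × ℤ × ℤ`. -/
abbrev V : Type := ((ℕ →₀ ℕ) × ℤ × ℤ) →₀ ZMod 2

open Classical in
/-- The `ℤ/2`-linear differential: a basis element `x = (R, m, t)` is sent to
`Φ x` when `m ≠ 0` and `R i = 0` for every `i < v₂(m)`, and to `0` otherwise. -/
noncomputable def d : V →ₗ[ZMod 2] V :=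
  Finsupp.lift V (ZMod 2) ((ℕ →₀ ℕ) × ℤ × ℤ) fun x =>
    if x.2.1 ≠ 0 ∧ ∀ i < v2 x.2.1, x.1 i = 0 then Finsupp.single (Φ x) 1 else 0

lemma lift_single {α M : Type*} [AddCommMonoid M] [Module (ZMod 2) M] (f : α → M) (x : α) :
    Finsupp.lift M (ZMod 2) α f (Finsupp.single x 1) = f x := by
  simp

open Classical in
noncomputable def PA : V →ₗ[ZMod 2] V :=
  Finsupp.lift V (ZMod 2) Xt fun x => if Ax x then Finsupp.single x 1 else 0

open Classical in
noncomputable def PB : V →ₗ[ZMod 2] V :=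
  Finsupp.lift V (ZMod 2) Xt fun x => if Bx x then Finsupp.single x 1 else 0

open Classical in
noncomputable def PC : V →ₗ[ZMod 2] V :=
  Finsupp.lift V (ZMod 2) Xt fun x => if Cx x then Finsupp.single x 1 else 0

open Classical in
noncomputable def hmap : V →ₗ[ZMod 2] V :=
  Finsupp.lift V (ZMod 2) Xt fun x => if Bx x then Finsupp.single (Ψ x) 1 else 0

open Classical in
noncomputable def πmap : V →ₗ[ZMod 2] (ℤ →₀ ZMod 2) :=
  Finsupp.lift (ℤ →₀ ZMod 2) (ZMod 2) Xt fun x => if Cx x then Finsupp.single x.2.2 1 else 0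

noncomputable def qmap : (ℤ →₀ ZMod 2) →ₗ[ZMod 2] V :=
  Finsupp.lift V (ZMod 2) ℤ fun t => Finsupp.single ((0, 0, t) : Xt) 1

lemma d_single (x : Xt) :
    d (Finsupp.single x 1) = if Ax x then Finsupp.single (Φ x) 1 else 0 := by
  rw [d, lift_single]
  by_cases h : Ax x
  · rw [if_pos h, if_pos (show x.2.1 ≠ 0 ∧ ∀ i < v2 x.2.1, x.1 i = 0 from h)]
  · rw [if_neg h, if_neg (show ¬(x.2.1 ≠ 0 ∧ ∀ i < v2 x.2.1, x.1 i = 0) from h)]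

lemma PA_single (x : Xt) :
    PA (Finsupp.single x 1) = if Ax x then Finsupp.single x 1 else 0 := by
  rw [PA, lift_single]

lemma PB_single (x : Xt) :
    PB (Finsupp.single x 1) = if Bx x then Finsupp.single x 1 else 0 := by
  rw [PB, lift_single]

lemma PC_single (x : Xt) :
    PC (Finsupp.single x 1) = if Cx x then Finsupp.single x 1 else 0 := by
  rw [PC, lift_single]

lemma hmap_single (x : Xt) :
    hmap (Finsupp.single x 1) = if Bx x then Finsupp.single (Ψ x) 1 else 0 := by
  rw [hmap, lift_single]

lemma πmap_single (x : Xt) :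
    πmap (Finsupp.single x 1) = if Cx x then Finsupp.single x.2.2 1 else 0 := by
  rw [πmap, lift_single]

lemma qmap_single (t : ℤ) :
    qmap (Finsupp.single t 1) = Finsupp.single ((0, 0, t) : Xt) 1 := by
  rw [qmap, lift_single]

lemma ext_aux {N : Type*} [AddCommMonoid N] [Module (ZMod 2) N]
    {f g : V →ₗ[ZMod 2] N} (h : ∀ x : Xt, f (Finsupp.single x 1) = g (Finsupp.single x 1)) :
    f = g := by
  apply Finsupp.lhom_ext'
  intro x
  apply LinearMap.ext_ring
  simpa using h x

lemma ext_auxZ {N : Type*} [AddCommMonoid N] [Module (ZMod 2) N]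
    {f g : (ℤ →₀ ZMod 2) →ₗ[ZMod 2] N}
    (h : ∀ t : ℤ, f (Finsupp.single t 1) = g (Finsupp.single t 1)) : f = g := by
  apply Finsupp.lhom_ext'
  intro t
  apply LinearMap.ext_ring
  simpa using h t

lemma dd : d ∘ₗ d = 0 := by
  apply ext_aux
  intro x
  rw [LinearMap.comp_apply, d_single]
  by_cases h : Ax x
  · rw [if_pos h, d_single, if_neg (Bx_Phi h).1, LinearMap.zero_apply]
  · rw [if_neg h, map_zero, LinearMap.zero_apply]

lemma hd : hmap ∘ₗ d = PA := by
  apply ext_aux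
  intro x
  rw [LinearMap.comp_apply, d_single, PA_single]
  by_cases h : Ax x
  · rw [if_pos h, if_pos h, hmap_single, if_pos (Bx_Phi h), Psi_Phi h]
  · rw [if_neg h, if_neg h, map_zero]

lemma dh : d ∘ₗ hmap = PB := by
  apply ext_aux
  intro x
  rw [LinearMap.comp_apply, hmap_single, PB_single]
  by_cases h : Bx x
  · rw [if_pos h, if_pos h, d_single, if_pos (Ax_Psi h), Phi_Psi h]
  · rw [if_neg h, if_neg h, map_zero]

lemma pid : πmap ∘ₗ d = 0 := by
  apply ext_aux
  intro x
  rw [LinearMap.comp_apply, d_single, LinearMap.zero_apply]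
  by_cases h : Ax x
  · rw [if_pos h, πmap_single, if_neg (Bx_Phi h).2]
  · rw [if_neg h, map_zero]

lemma dq : d ∘ₗ qmap = 0 := by
  apply ext_auxZ
  intro t
  rw [LinearMap.comp_apply, qmap_single, d_single, LinearMap.zero_apply,
    if_neg (fun hA : Ax (0, 0, t) => hA.1 rfl)]

lemma piq : πmap ∘ₗ qmap = LinearMap.id := by
  apply ext_auxZ
  intro t
  rw [LinearMap.comp_apply, qmap_single, πmap_single, if_pos (show Cx ((0,0,t) : Xt) from ⟨rfl, rfl⟩),
    LinearMap.id_apply]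

lemma Cx_eq {x : Xt} (h : Cx x) : x = ((0, 0, x.2.2) : Xt) := by
  obtain ⟨h1, h2⟩ := h
  exact Prod.ext h1 (Prod.ext h2 rfl)

lemma qpi : qmap ∘ₗ πmap = PC := by
  apply ext_aux
  intro x
  rw [LinearMap.comp_apply, πmap_single, PC_single]
  by_cases h : Cx x
  · rw [if_pos h, if_pos h, qmap_single, ← Cx_eq h]
  · rw [if_neg h, if_neg h, map_zero]

lemma PABC : PA + PB + PC = LinearMap.id := by
  apply ext_aux
  intro x
  rw [LinearMap.add_apply, LinearMap.add_apply, PA_single, PB_single, PC_single,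
    LinearMap.id_apply]
  by_cases hA : Ax x
  · rw [if_pos hA, if_neg (fun hB : Bx x => hB.1 hA), if_neg (Ax_not_Cx hA), add_zero, add_zero]
  · by_cases hC : Cx x
    · rw [if_neg hA, if_neg (fun hB : Bx x => hB.2 hC), if_pos hC, zero_add, zero_add]
    · rw [if_neg hA, if_pos ⟨hA, hC⟩, if_neg hC, zero_add, add_zero]

/-- The homology `ker d / im d`: the quotient of `ker d` by the image of `d`
(viewed as a submodule of `ker d`). -/
abbrev TateHomology : Type :=
  @HasQuotient.Quotient _ _
    (Submodule.hasQuotient (M := LinearMap.ker d) (R := ZMod 2))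
    (Submodule.comap (LinearMap.ker d).subtype (LinearMap.range d))

noncomputable abbrev Nsub : Submodule (ZMod 2) (LinearMap.ker d) :=
  Submodule.comap (LinearMap.ker d).subtype (LinearMap.range d)

noncomputable def pker : LinearMap.ker d →ₗ[ZMod 2] (ℤ →₀ ZMod 2) :=
  πmap ∘ₗ (LinearMap.ker d).subtype

lemma Nsub_le : Nsub ≤ LinearMap.ker pker := by
  rintro x hx
  rw [Submodule.mem_comap, LinearMap.mem_range] at hx
  obtain ⟨g, hg⟩ := hx
  have h1 : pker x = πmap (d g) := by rw [hg]; rfl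
  rw [LinearMap.mem_ker, h1, ← LinearMap.comp_apply, pid, LinearMap.zero_apply]

noncomputable def emap : TateHomology →ₗ[ZMod 2] (ℤ →₀ ZMod 2) :=
  Submodule.liftQ Nsub pker Nsub_le

lemma qker (u : ℤ →₀ ZMod 2) : qmap u ∈ LinearMap.ker d := by
  rw [LinearMap.mem_ker, ← LinearMap.comp_apply, dq, LinearMap.zero_apply]

noncomputable def q' : (ℤ →₀ ZMod 2) →ₗ[ZMod 2] LinearMap.ker d :=
  qmap.codRestrict (LinearMap.ker d) qker

noncomputable def einv : (ℤ →₀ ZMod 2) →ₗ[ZMod 2] TateHomology :=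
  Nsub.mkQ ∘ₗ q'

lemma e_einv : emap ∘ₗ einv = LinearMap.id := by
  apply LinearMap.ext
  intro u
  rw [LinearMap.comp_apply, einv, LinearMap.comp_apply, Submodule.mkQ_apply, emap,
    Submodule.liftQ_apply, LinearMap.id_apply]
  show πmap (qmap u) = u
  rw [← LinearMap.comp_apply, piq, LinearMap.id_apply]

lemma einv_e : einv ∘ₗ emap = LinearMap.id := by
  apply Submodule.linearMap_qext
  apply LinearMap.ext
  intro x
  simp only [LinearMap.comp_apply, Submodule.mkQ_apply, LinearMap.id_apply]
  rw [emap, Submodule.liftQ_apply]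
  set f : V := (x : V) with hf
  have hdf : d f = 0 := x.2
  have key : qmap (πmap f) - f = d (-(hmap f)) := by
    have h1 : PA f + PB f + PC f = f := by
      have := congrArg (fun (g : V →ₗ[ZMod 2] V) => g f) PABC
      simpa using this
    have h2 : PA f = 0 := by
      rw [← hd, LinearMap.comp_apply, hdf, map_zero]
    have h3 : PB f = d (hmap f) := by rw [← dh]; rfl
    have h4 : qmap (πmap f) = PC f := by rw [← qpi]; rfl
    rw [h2, zero_add, h3] at h1
    have h5 : PC f = f - d (hmap f) := eq_sub_of_add_eq' h1
    rw [h4, h5, map_neg]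
    abel
  rw [einv, LinearMap.comp_apply, Submodule.mkQ_apply]
  rw [Submodule.Quotient.eq]
  rw [Submodule.mem_comap, LinearMap.mem_range]
  exact ⟨-(hmap f), key.symm⟩

noncomputable def eqv : (ℤ →₀ ZMod 2) ≃ₗ[ZMod 2] TateHomology :=
  LinearEquiv.ofLinear einv emap einv_e e_einv

theorem tate_homology_BPR :
    d ∘ₗ d = 0 ∧
    ∃ b : Module.Basis ℤ (ZMod 2) TateHomology,
      (∀ t : ℤ,
        ∃ h : Finsupp.single ((0 : ℕ →₀ ℕ), (0 : ℤ), t) (1 : ZMod 2) ∈ LinearMap.ker d,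
          b t = Submodule.Quotient.mk
            ⟨Finsupp.single ((0 : ℕ →₀ ℕ), (0 : ℤ), t) (1 : ZMod 2), h⟩) ∧
      Nonempty (TateHomology ≃ₗ[ZMod 2] (ℤ →₀ ZMod 2)) := by
  refine ⟨dd, ?_⟩
  have hker : ∀ t : ℤ, Finsupp.single ((0 : ℕ →₀ ℕ), (0 : ℤ), t) (1 : ZMod 2) ∈ LinearMap.ker d := by
    intro t
    rw [LinearMap.mem_ker, d_single, if_neg (fun hA : Ax (0, 0, t) => hA.1 rfl)]
  refine ⟨(Finsupp.basisSingleOne).map eqv, fun t => ⟨hker t, ?_⟩, ⟨eqv.symm⟩⟩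
  rw [Module.Basis.map_apply]
  simp only [Finsupp.coe_basisSingleOne]
  rw [eqv, LinearEquiv.ofLinear_apply, einv, LinearMap.comp_apply, Submodule.mkQ_apply]
  congr 1
  apply Subtype.ext
  show qmap (Finsupp.single t 1) = _
  rw [qmap_single]
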